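/- Let λ ∈ [0,1), δ > 0, K > 0, and let a⁰ : {1,2,3,...} → {0,1} be multiplicative (a⁰(1) = 1 and a⁰(mn) = a⁰(m)·a⁰(n) for coprime m, n). Suppose the set A = { p prime : a⁰(p) = 1 } satisfies | #{ p ∈ A : p ≤ t } − (1−λ)·t/log t | ≤ K·t/(log t)^{1+δ} for all t ≥ 2. For real s > 1 let φ(s) = Σ_{n ≥ 1} a⁰(n)·n^{−s} (which converges). Then lim_{s → 1⁺} (s−1)^{1−λ}·φ(s) exists and is a positive real number. -/

import Mathlib

open Real Filter MeasureTheory Set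


noncomputable def psi (u : ℝ) : ℝ := Real.exp (-u) / u - 1 / u

lemma psi_meas : Measurable psi := by
  unfold psi; fun_prop

lemma psi_bound {u : ℝ} (hu : 0 < u) : ‖psi u‖ ≤ 1 := by
  have h1 : psi u = (Real.exp (-u) - 1) / u := by unfold psi; ring
  rw [h1, Real.norm_eq_abs, abs_div, abs_of_pos hu, div_le_one hu, abs_le]
  have h2 : 1 - u ≤ Real.exp (-u) := by
    have := Real.add_one_le_exp (-u); linarith
  have h3 : Real.exp (-u) ≤ 1 := by
    rw [Real.exp_le_one_iff]; linarith
  constructor <;> linarith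

lemma psi_integrableOn (x : ℝ) (hx : 0 ≤ x) : IntegrableOn psi (Ioc x 1) := by
  refine Integrable.mono' (g := fun _ => (1:ℝ)) (integrableOn_const measure_Ioc_lt_top.ne)
    psi_meas.aestronglyMeasurable ?_
  filter_upwards [ae_restrict_mem measurableSet_Ioc] with u hu
  exact psi_bound (lt_of_le_of_lt hx hu.1)

lemma expu_integrableOn_Ioi (x : ℝ) (hx : 0 < x) :
    IntegrableOn (fun u : ℝ => Real.exp (-u) / u) (Ioi x) := by
  refine Integrable.mono' (g := fun u => Real.exp (-(1:ℝ) * u) / x)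
    ((exp_neg_integrableOn_Ioi x one_pos).div_const x)
    ((Real.measurable_exp.comp measurable_neg).div measurable_id).aestronglyMeasurable ?_
  filter_upwards [ae_restrict_mem measurableSet_Ioi] with u hu
  have hu0 : 0 < u := hx.trans hu
  rw [Real.norm_eq_abs, abs_div, abs_of_pos (Real.exp_pos _), abs_of_pos hu0, neg_one_mul]
  exact div_le_div_of_nonneg_left (Real.exp_pos _).le hx hu.le

noncomputable def E1 (x : ℝ) : ℝ := ∫ u in Ioi x, Real.exp (-u) / u

lemma E1_tendsto : ∃ C, Tendsto (fun x => E1 x + Real.log x) (nhdsWithin 0 (Ioi 0)) (nhds C) := by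
  set C2 : ℝ := ∫ u in Ioi (1:ℝ), Real.exp (-u) / u with hC2
  set C1 : ℝ := ∫ u in Ioc (0:ℝ) 1, psi u with hC1
  refine ⟨C1 + C2, ?_⟩
  have key : Tendsto (fun x => ∫ u in Ioc x 1, psi u) (nhdsWithin 0 (Ioi 0)) (nhds C1) := by
    have := MeasureTheory.tendsto_integral_filter_of_dominated_convergence
      (μ := volume.restrict (Ioc (0:ℝ) 1)) (l := nhdsWithin (0:ℝ) (Ioi 0))
      (F := fun x u => Set.indicator (Ioi x) psi u) (f := psi) (bound := fun _ => (1:ℝ))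
      ?_ ?_ ?_ ?_
    · refine Tendsto.congr' ?_ this
      filter_upwards [Ioo_mem_nhdsGT_of_mem (Set.left_mem_Ico.2 one_pos)] with x hx
      rw [integral_indicator measurableSet_Ioi, Measure.restrict_restrict measurableSet_Ioi]
      congr 1
      congr 1
      ext u
      simp only [Set.mem_inter_iff, Set.mem_Ioi, Set.mem_Ioc]
      constructor
      · rintro ⟨h1, _, h3⟩; exact ⟨h1, h3⟩
      · rintro ⟨h1, h2⟩; exact ⟨h1, hx.1.trans h1, h2⟩
    · exact Eventually.of_forall fun x => (psi_meas.indicator measurableSet_Ioi).aestronglyMeasurable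
    · refine Eventually.of_forall fun x => ?_
      filter_upwards [ae_restrict_mem measurableSet_Ioc] with u hu
      rcases Set.indicator_eq_zero_or_self (Ioi x) psi u with h | h <;> rw [h]
      · simp
      · exact psi_bound hu.1
    · exact (integrableOn_const measure_Ioc_lt_top.ne)
    · filter_upwards [ae_restrict_mem measurableSet_Ioc] with u hu
      refine Tendsto.congr' ?_ tendsto_const_nhds
      filter_upwards [Ioo_mem_nhdsGT_of_mem (Set.left_mem_Ico.2 hu.1)] with x hx
      exact (Set.indicator_of_mem (Set.mem_Ioi.2 hx.2) psi).symm
  have heq : ∀ᶠ x in nhdsWithin (0:ℝ) (Ioi 0),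
      E1 x + Real.log x = (∫ u in Ioc x 1, psi u) + C2 := by
    filter_upwards [Ioo_mem_nhdsGT_of_mem (Set.left_mem_Ico.2 one_pos)] with x hx
    have hx0 : 0 < x := hx.1
    have hx1 : x < 1 := hx.2
    have hsplit : E1 x = (∫ u in Ioc x 1, Real.exp (-u) / u) + C2 := by
      rw [hC2, E1, ← MeasureTheory.setIntegral_union]
      · rw [Set.Ioc_union_Ioi_eq_Ioi hx1.le]
      · exact Set.Ioc_disjoint_Ioi le_rfl
      · exact measurableSet_Ioi
      · exact ((expu_integrableOn_Ioi x hx0).mono_set Ioc_subset_Ioi_self)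
      · exact expu_integrableOn_Ioi 1 one_pos
    have hlog : Real.log x = - ∫ u in Ioc x 1, 1 / u := by
      have : ∫ u in x..1, 1 / u = Real.log (1 / x) := by
        apply integral_one_div
        intro h
        rcases Set.mem_uIcc.1 h with ⟨h1, _⟩ | ⟨_, h2⟩ <;> linarith
      rw [intervalIntegral.integral_of_le hx1.le] at this
      rw [this, Real.log_div one_ne_zero hx0.ne', Real.log_one]
      ring
    have hpsiInt : ∫ u in Ioc x 1, psi u
        = (∫ u in Ioc x 1, Real.exp (-u) / u) - ∫ u in Ioc x 1, 1 / u := by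
      unfold psi
      apply MeasureTheory.integral_sub
      · exact ((expu_integrableOn_Ioi x hx0).mono_set Ioc_subset_Ioi_self)
      · apply Integrable.mono' (g := fun _ => 1 / x) (integrableOn_const measure_Ioc_lt_top.ne)
          (by fun_prop)
        filter_upwards [ae_restrict_mem measurableSet_Ioc] with u hu
        rw [Real.norm_eq_abs, abs_div, abs_one, abs_of_pos (hx0.trans hu.1)]
        exact div_le_div_of_nonneg_left one_pos.le hx0 hu.1.le
    rw [hsplit, hlog, hpsiInt]; ring
  exact Tendsto.congr' (EventuallyEq.symm heq) ((key.add_const C2))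



-- change of variables: ∫_{Ioi 2} t^{-σ}/log t dt = E1 ((σ-1) * log 2)
lemma I_eq_E1 {σ : ℝ} (hσ : 1 < σ) :
    ∫ t in Ioi (2:ℝ), t ^ (-σ) / Real.log t = E1 ((σ - 1) * Real.log 2) := by
  have hσ1 : 0 < σ - 1 := by linarith
  have himg : (fun t : ℝ => (σ - 1) * Real.log t) '' (Ioi 2) = Ioi ((σ - 1) * Real.log 2) := by
    ext u
    simp only [Set.mem_image, Set.mem_Ioi]
    constructor
    · rintro ⟨t, ht, rfl⟩
      exact mul_lt_mul_of_pos_left (Real.log_lt_log two_pos ht) hσ1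
    · intro hu
      refine ⟨Real.exp (u / (σ - 1)), ?_, ?_⟩
      · have h2 : Real.log 2 < u / (σ - 1) := by
          rw [lt_div_iff₀ hσ1]; linarith [hu]
        calc (2:ℝ) = Real.exp (Real.log 2) := (Real.exp_log two_pos).symm
        _ < Real.exp (u / (σ - 1)) := Real.exp_lt_exp.2 h2
      · rw [Real.log_exp]; field_simp
  have := MeasureTheory.integral_image_eq_integral_abs_deriv_smul (f' := fun t => (σ-1)/t)
    measurableSet_Ioi (s := Ioi 2) (f := fun t => (σ-1) * Real.log t)
    (fun t ht => (((Real.hasDerivAt_log (show (t:ℝ) ≠ 0 by have := Set.mem_Ioi.1 ht; positivity)).const_mul (σ-1)).hasDerivWithinAt).congr_deriv (by ring))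
    ?_ (fun u => Real.exp (-u) / u)
  · rw [himg] at this
    rw [E1, this]
    apply setIntegral_congr_fun measurableSet_Ioi
    intro t ht
    have ht0 : (0:ℝ) < t := lt_trans two_pos ht
    have hlt : 0 < Real.log t := Real.log_pos (by linarith [Set.mem_Ioi.1 ht])
    have habs : |(σ-1)/t| = (σ-1)/t := abs_of_pos (by positivity)
    have hexp : Real.exp (-((σ-1) * Real.log t)) = t ^ (-(σ-1)) := by
      rw [Real.rpow_def_of_pos ht0]; ring_nf
    show t ^ (-σ) / Real.log t = |(σ-1)/t| • (Real.exp (-((σ-1) * Real.log t)) / ((σ-1) * Real.log t))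
    rw [smul_eq_mul, habs, hexp]
    rw [show (-σ : ℝ) = -(σ-1) + (-1) by ring, Real.rpow_add ht0, Real.rpow_neg_one]
    field_simp
  · intro a ha b hb hab
    have := mul_left_cancel₀ (ne_of_gt hσ1) hab
    exact Real.log_injOn_pos (Set.mem_Ioi.2 (by linarith [Set.mem_Ioi.1 ha] : (0:ℝ) < a)) (Set.mem_Ioi.2 (by linarith [Set.mem_Ioi.1 hb] : (0:ℝ) < b)) this

-- integrability of 1/(t * (log t)^(1+δ)) on Ioi 2
lemma log_pow_integrable {δ : ℝ} (hδ : 0 < δ) :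
    IntegrableOn (fun t : ℝ => 1 / (t * Real.log t ^ (1+δ))) (Ioi 2) := by
  have key : IntegrableOn (fun t : ℝ => Real.log t ^ (-δ - 1) / t) (Ioi 2) := by
    refine integrableOn_Ioi_deriv_of_nonneg (g := fun t => -δ⁻¹ * Real.log t ^ (-δ)) ?_ ?_ ?_
      (l := 0) ?_
    · apply ContinuousWithinAt.mul continuousWithinAt_const
      apply ContinuousWithinAt.rpow_const
      · exact (Real.continuousAt_log (by norm_num)).continuousWithinAt
      · left; exact (Real.log_pos one_lt_two).ne'
    · intro x hx
      have hx0 : (0:ℝ) < x := lt_trans two_pos hx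
      have hlx : 0 < Real.log x := Real.log_pos (by linarith [Set.mem_Ioi.1 hx])
      have h1 : HasDerivAt (fun t : ℝ => Real.log t ^ (-δ)) ((-δ) * Real.log x ^ (-δ - 1) * x⁻¹) x := by
        have := (Real.hasDerivAt_rpow_const (x := Real.log x) (p := -δ) (Or.inl hlx.ne')).comp x
          (Real.hasDerivAt_log hx0.ne')
        simpa [Function.comp_def, mul_comm, mul_assoc, mul_left_comm] using this
      have h2 := h1.const_mul (-δ⁻¹)
      convert h2 using 1
      · rfl
      · rfl
      · simp only [neg_mul, mul_neg, neg_neg, ← mul_assoc, inv_mul_cancel₀ hδ.ne', one_mul, div_eq_mul_inv]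
    · intro x hx
      have hx0 : (0:ℝ) < x := lt_trans two_pos hx
      have hlx : 0 < Real.log x := Real.log_pos (by linarith [Set.mem_Ioi.1 hx])
      positivity
    · have h1 : Tendsto (fun t : ℝ => Real.log t ^ (-δ)) atTop (nhds 0) := by
        apply Filter.Tendsto.comp (tendsto_rpow_neg_atTop hδ) Real.tendsto_log_atTop
      have := h1.const_mul (-δ⁻¹)
      simpa using this
  apply key.congr_fun ?_ measurableSet_Ioi
  intro t ht
  have ht0 : (0:ℝ) < t := lt_trans two_pos ht
  have hlt : 0 < Real.log t := Real.log_pos (by linarith [Set.mem_Ioi.1 ht])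
  show Real.log t ^ (-δ - 1) / t = 1 / (t * Real.log t ^ (1 + δ))
  rw [show (-δ - 1 : ℝ) = -(1 + δ) by ring, Real.rpow_neg hlt.le]
  have : Real.log t ^ (1 + δ) ≠ 0 := by positivity
  field_simp


section Tonelli
variable {c : ℕ → ℝ} (hc0 : ∀ n, 0 ≤ c n) (hc1 : ∀ n, c n ≤ 1) (hcsmall : ∀ n < 2, c n = 0)

noncomputable def piA (c : ℕ → ℝ) (t : ℝ) : ℝ := ∑' n : ℕ, (if (n:ℝ) ≤ t then c n else 0)

include hcsmall in
lemma piA_eq_sum (t : ℝ) :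
    piA c t = ∑ n ∈ Finset.range (⌊t⌋₊ + 1), (if (n:ℝ) ≤ t then c n else 0) := by
  apply tsum_eq_sum
  intro n hn
  rw [Finset.mem_range, not_lt] at hn
  rw [if_neg]
  intro h
  have h2 : n ≤ ⌊t⌋₊ := Nat.le_floor h
  omega

include hc0 hcsmall in
lemma piA_summand_summable (t : ℝ) :
    Summable (fun n : ℕ => if (n:ℝ) ≤ t then c n else 0) := by
  apply summable_of_ne_finset_zero (s := Finset.range (⌊t⌋₊ + 1))
  intro n hn
  rw [Finset.mem_range, not_lt] at hn
  rw [if_neg]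
  intro h
  have h2 : n ≤ ⌊t⌋₊ := Nat.le_floor h
  omega

include hc0 hc1 hcsmall in
lemma piA_monotone : Monotone (piA c) := by
  intro t1 t2 h
  apply Summable.tsum_le_tsum _ (piA_summand_summable hc0 hcsmall t1) (piA_summand_summable hc0 hcsmall t2)
  intro n
  by_cases hn : (n:ℝ) ≤ t1
  · rw [if_pos hn, if_pos (hn.trans h)]
  · rw [if_neg hn]
    by_cases hn2 : (n:ℝ) ≤ t2
    · rw [if_pos hn2]; exact hc0 n
    · rw [if_neg hn2]

include hc0 hcsmall in
lemma piA_nonneg (t : ℝ) : 0 ≤ piA c t := by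
  apply tsum_nonneg
  intro n
  split <;> simp [hc0 n]

include hc0 hc1 in
lemma summable_c_rpow {σ : ℝ} (hσ : 1 < σ) : Summable (fun n : ℕ => c n * (n:ℝ) ^ (-σ)) := by
  refine Summable.of_nonneg_of_le (fun n => ?_) (fun n => ?_)
    (Real.summable_nat_rpow.2 (by linarith : -σ < -1))
  · exact mul_nonneg (hc0 n) (Real.rpow_nonneg (Nat.cast_nonneg n) _)
  · calc c n * (n:ℝ) ^ (-σ) ≤ 1 * (n:ℝ) ^ (-σ) :=
        mul_le_mul_of_nonneg_right (hc1 n) (Real.rpow_nonneg (Nat.cast_nonneg n) _)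
    _ = (n:ℝ) ^ (-σ) := one_mul _

include hc0 hc1 hcsmall in
lemma tonelli {σ : ℝ} (hσ : 1 < σ) :
    ∑' n : ℕ, c n * (n:ℝ) ^ (-σ)
      = ∫ t in Ioi (2:ℝ), piA c t * (σ * t ^ (-σ - 1)) := by
  classical
  have hσ0 : (0:ℝ) < σ := by linarith
  set h : ℕ → ℝ → ℝ := fun n t => (if (n:ℝ) ≤ t then c n else 0) * (σ * t ^ (-σ - 1)) with hh
  -- individual integrals
  have hint : ∀ n : ℕ, 2 ≤ n → ∫ t in Ioi (2:ℝ), h n t = c n * (n:ℝ) ^ (-σ) := by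
    intro n hn
    have hn2 : (2:ℝ) ≤ (n:ℝ) := by exact_mod_cast hn
    have hn0 : (0:ℝ) < (n:ℝ) := by linarith
    have hind : ∀ t, h n t = Set.indicator (Ici (n:ℝ)) (fun t => c n * (σ * t ^ (-σ - 1))) t := by
      intro t
      rw [Set.indicator_apply]
      show (if (n:ℝ) ≤ t then c n else 0) * (σ * t ^ (-σ - 1)) = _
      by_cases hcase : (n:ℝ) ≤ t
      · rw [if_pos hcase, if_pos (Set.mem_Ici.2 hcase)]
      · rw [if_neg hcase, if_neg (fun hmem => hcase (Set.mem_Ici.1 hmem)), zero_mul]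
    have hres : volume.restrict (Ici (n:ℝ) ∩ Ioi 2) = volume.restrict (Ioi (n:ℝ)) := by
      apply Measure.restrict_congr_set
      have hne : ∀ᵐ (t:ℝ), t ≠ (n:ℝ) := by
        rw [ae_iff]
        have : {t : ℝ | ¬ t ≠ (n:ℝ)} = {(n:ℝ)} := by ext t; simp
        rw [this]
        exact measure_singleton _
      filter_upwards [hne] with t htne
      simp only [Set.mem_inter_iff, Set.mem_Ici, Set.mem_Ioi, eq_iff_iff]
      constructor
      · rintro ⟨h1, _⟩; exact lt_of_le_of_ne h1 (Ne.symm htne)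
      · intro h1; exact ⟨h1.le, lt_of_le_of_lt hn2 h1⟩
    calc ∫ t in Ioi (2:ℝ), h n t
        = ∫ t in Ioi (2:ℝ), Set.indicator (Ici (n:ℝ)) (fun t => c n * (σ * t ^ (-σ - 1))) t := by
          simp_rw [hind]
      _ = ∫ t in Ici (n:ℝ) ∩ Ioi 2, c n * (σ * t ^ (-σ - 1)) := by
          rw [integral_indicator measurableSet_Ici, Measure.restrict_restrict measurableSet_Ici]
      _ = ∫ t in Ioi (n:ℝ), c n * (σ * t ^ (-σ - 1)) := by rw [hres]
      _ = c n * σ * ∫ t in Ioi (n:ℝ), t ^ (-σ - 1) := by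
          rw [← integral_const_mul]; congr 1; ext t; ring
      _ = c n * (n:ℝ) ^ (-σ) := by
          rw [integral_Ioi_rpow_of_lt (by linarith) hn0]
          have : (-σ - 1 + 1 : ℝ) = -σ := by ring
          rw [this]
          field_simp
  have hint0 : ∀ n : ℕ, n < 2 → (h n = fun _ => (0:ℝ)) := by
    intro n hn
    funext t
    rw [hh]
    simp [hcsmall n hn]
  have hintegrable : ∀ n : ℕ, Integrable (h n) (volume.restrict (Ioi (2:ℝ))) := by
    intro n
    rcases lt_or_ge n 2 with hn | hn
    · rw [hint0 n hn]; exact integrable_zero _ _ _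
    · have hb : IntegrableOn (fun t : ℝ => σ * t ^ (-σ - 1)) (Ioi 2) :=
        (integrableOn_Ioi_rpow_of_lt (by linarith) two_pos).const_mul σ
      refine Integrable.mono' hb ?_ ?_
      · apply AEStronglyMeasurable.mul ?_ hb.1
        apply Measurable.aestronglyMeasurable
        classical
        have : (fun t : ℝ => if (n:ℝ) ≤ t then c n else 0)
            = Set.indicator (Ici (n:ℝ)) (fun _ => c n) := by
          funext t; rw [Set.indicator_apply]; simp [Set.mem_Ici]
        rw [this]
        exact (measurable_const.indicator measurableSet_Ici)
      · filter_upwards [ae_restrict_mem measurableSet_Ioi] with t ht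
        have ht0 : (0:ℝ) < t := lt_trans two_pos ht
        show ‖(if (n:ℝ) ≤ t then c n else 0) * (σ * t ^ (-σ - 1))‖ ≤ σ * t ^ (-σ - 1)
        rw [Real.norm_eq_abs, abs_mul]
        have h2 : |σ * t ^ (-σ - 1)| = σ * t ^ (-σ - 1) := by
          apply abs_of_nonneg; positivity
        rw [h2]
        have h3 : |if (n:ℝ) ≤ t then c n else 0| ≤ 1 := by
          split
          · rw [abs_of_nonneg (hc0 n)]; exact hc1 n
          · simp
        exact mul_le_of_le_one_left (by positivity) h3
  have hmeas : ∀ n : ℕ, AEStronglyMeasurable (h n) (volume.restrict (Ioi (2:ℝ))) :=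
    fun n => (hintegrable n).1
  have hnonneg : ∀ n t, t ∈ Ioi (2:ℝ) → 0 ≤ h n t := by
    intro n t ht
    have ht0 : (0:ℝ) < t := lt_trans two_pos ht
    show 0 ≤ (if (n:ℝ) ≤ t then c n else 0) * (σ * t ^ (-σ - 1))
    apply mul_nonneg
    · split
      · exact hc0 n
      · exact le_refl 0
    · positivity
  -- lintegral bound for integral_tsum
  have hsum : Summable (fun n : ℕ => c n * (n:ℝ) ^ (-σ)) := summable_c_rpow hc0 hc1 hσ
  have hintval : ∀ n : ℕ, ∫ t in Ioi (2:ℝ), h n t = c n * (n:ℝ) ^ (-σ) := by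
    intro n
    rcases lt_or_ge n 2 with hn | hn
    · rw [hint0 n hn, hcsmall n hn]
      simp
    · exact hint n hn
  have hlint : ∀ n : ℕ, ∫⁻ t in Ioi (2:ℝ), ‖h n t‖₊ = ENNReal.ofReal (c n * (n:ℝ) ^ (-σ)) := by
    intro n
    have h1 : ∫⁻ t in Ioi (2:ℝ), (‖h n t‖₊ : ENNReal) = ∫⁻ t in Ioi (2:ℝ), ENNReal.ofReal (h n t) := by
      apply lintegral_congr_ae
      filter_upwards [ae_restrict_mem measurableSet_Ioi] with t ht
      rw [← Real.enorm_eq_ofReal (hnonneg n t ht)]; rfl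
    rw [h1, ← MeasureTheory.ofReal_integral_eq_lintegral_ofReal (hintegrable n)
      (by filter_upwards [ae_restrict_mem measurableSet_Ioi] with t ht using hnonneg n t ht),
      hintval n]
  have hne : ∑' n : ℕ, ∫⁻ t in Ioi (2:ℝ), ‖h n t‖₊ ≠ ⊤ := by
    simp_rw [hlint]
    rw [← ENNReal.ofReal_tsum_of_nonneg (fun n => mul_nonneg (hc0 n)
      (Real.rpow_nonneg (Nat.cast_nonneg n) _)) hsum]
    exact ENNReal.ofReal_ne_top
  have key := MeasureTheory.integral_tsum hmeas hne
  calc ∑' n : ℕ, c n * (n:ℝ) ^ (-σ) = ∑' n : ℕ, ∫ t in Ioi (2:ℝ), h n t := by simp_rw [hintval]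
    _ = ∫ t in Ioi (2:ℝ), ∑' n, h n t := key.symm
    _ = ∫ t in Ioi (2:ℝ), piA c t * (σ * t ^ (-σ - 1)) := by
        apply integral_congr_ae
        apply Eventually.of_forall
        intro t
        exact tsum_mul_right

end Tonelli


lemma pow_rpow_aux {x : ℝ} (hx : 0 ≤ x) (e : ℕ) (y : ℝ) :
    ((x ^ e : ℝ)) ^ y = (x ^ y) ^ e := by
  rw [← Real.rpow_natCast x e, ← Real.rpow_mul hx, mul_comm, Real.rpow_mul hx, Real.rpow_natCast]

lemma log_one_add_bounds {x : ℝ} (hx : 0 ≤ x) :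
    x - x ^ 2 ≤ Real.log (1 + x) ∧ Real.log (1 + x) ≤ x := by
  have h0 : (0:ℝ) < 1 + x := by linarith
  constructor
  · have h1 : Real.log (1 + x)⁻¹ ≤ (1 + x)⁻¹ - 1 :=
      Real.log_le_sub_one_of_pos (by positivity)
    rw [Real.log_inv] at h1
    have h2 : 1 - (1 + x)⁻¹ ≤ Real.log (1 + x) := by linarith
    have h3 : x - x ^ 2 ≤ 1 - (1 + x)⁻¹ := by
      have h4 : (1 + x)⁻¹ = 1 / (1 + x) := by ring
      rw [h4]
      have h5 : x - x ^ 2 ≤ x / (1 + x) := by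
        rw [le_div_iff₀ h0]; nlinarith
      have h6 : x / (1 + x) = 1 - 1 / (1 + x) := by field_simp; ring
      linarith
    linarith
  · have := Real.log_le_sub_one_of_pos h0
    linarith

section Euler
variable {a0 : ℕ → ℝ}
  (hval : ∀ n : ℕ, 1 ≤ n → a0 n = 0 ∨ a0 n = 1)
  (hone : a0 1 = 1)
  (hmul : ∀ m n : ℕ, 1 ≤ m → 1 ≤ n → Nat.Coprime m n → a0 (m * n) = a0 m * a0 n)

noncomputable def fe (a0 : ℕ → ℝ) (σ : ℝ) (n : ℕ) : ℝ :=
  (if n = 0 then 0 else a0 n) * (n:ℝ) ^ (-σ)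

noncomputable def FF (a0 : ℕ → ℝ) (σ : ℝ) (p : ℕ) : ℝ := ∑' e : ℕ, fe a0 σ (p ^ e)

noncomputable def cc (a0 : ℕ → ℝ) (n : ℕ) : ℝ :=
  if n.Prime ∧ a0 n = 1 then 1 else 0

include hval in
lemma fe_nonneg (σ : ℝ) (n : ℕ) : 0 ≤ fe a0 σ n := by
  unfold fe
  rcases Nat.eq_zero_or_pos n with rfl | hn
  · simp
  · rcases hval n hn with h | h <;>
      simp [h, Nat.pos_iff_ne_zero.1 hn, Real.rpow_nonneg (Nat.cast_nonneg n)]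

include hval in
lemma fe_le (σ : ℝ) (n : ℕ) : fe a0 σ n ≤ (n:ℝ) ^ (-σ) := by
  unfold fe
  rcases Nat.eq_zero_or_pos n with rfl | hn
  · simp [Real.rpow_nonneg]
  · rcases hval n hn with h | h <;>
      simp [h, Nat.pos_iff_ne_zero.1 hn, Real.rpow_nonneg (Nat.cast_nonneg n)]

include hval in
lemma fe_norm_summable {σ : ℝ} (hσ : 1 < σ) : Summable (fun n => ‖fe a0 σ n‖) := by
  refine Summable.of_nonneg_of_le (fun n => norm_nonneg _) (fun n => ?_)
    (Real.summable_nat_rpow.2 (by linarith : -σ < -1))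
  rw [Real.norm_eq_abs, abs_of_nonneg (fe_nonneg hval σ n)]
  exact fe_le hval σ n

include hone in
lemma fe_one (σ : ℝ) : fe a0 σ 1 = 1 := by unfold fe; simp [hone]

include hmul in
lemma fe_mul (σ : ℝ) : ∀ {m n : ℕ}, Nat.Coprime m n →
    fe a0 σ (m * n) = fe a0 σ m * fe a0 σ n := by
  intro m n hcop
  rcases Nat.eq_zero_or_pos m with rfl | hm
  · have : n = 1 := by simpa [Nat.coprime_zero_left] using hcop
    subst this
    unfold fe; simp
  rcases Nat.eq_zero_or_pos n with rfl | hn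
  · have : m = 1 := by simpa [Nat.coprime_zero_right] using hcop
    subst this
    unfold fe; simp
  unfold fe
  rw [if_neg (by positivity), if_neg (Nat.pos_iff_ne_zero.1 hm), if_neg (Nat.pos_iff_ne_zero.1 hn),
    hmul m n hm hn hcop]
  have hcast : ((m * n : ℕ) : ℝ) = (m:ℝ) * (n:ℝ) := by push_cast; ring
  rw [hcast, Real.mul_rpow (Nat.cast_nonneg m) (Nat.cast_nonneg n)]
  ring

include hval hone hmul in
lemma euler_hasProd {σ : ℝ} (hσ : 1 < σ) :
    HasProd (fun p : Nat.Primes => FF a0 σ p) (∑' n, fe a0 σ n) := by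
  have := EulerProduct.eulerProduct_hasProd (f := fe a0 σ) (fe_one hone σ) (fe_mul hmul σ)
    (fe_norm_summable hval hσ) (by unfold fe; simp)
  exact this


lemma r_pos {p : ℕ} (hp : p.Prime) (σ : ℝ) : 0 < (p:ℝ) ^ (-σ) :=
  Real.rpow_pos_of_pos (by exact_mod_cast hp.pos) _

lemma r_le_half {p : ℕ} (hp : p.Prime) {σ : ℝ} (hσ : 1 ≤ σ) : (p:ℝ) ^ (-σ) ≤ 1/2 := by
  have hp2 : (2:ℝ) ≤ (p:ℝ) := by exact_mod_cast hp.two_le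
  calc (p:ℝ) ^ (-σ) ≤ (p:ℝ) ^ (-1:ℝ) :=
        Real.rpow_le_rpow_of_exponent_le (by linarith) (by linarith)
    _ = ((p:ℝ))⁻¹ := Real.rpow_neg_one _
    _ ≤ 1/2 := by
        rw [one_div]
        exact inv_anti₀ two_pos hp2

include hval in
lemma fe_pow_le {p : ℕ} (hp : p.Prime) (σ : ℝ) (e : ℕ) :
    fe a0 σ (p ^ e) ≤ ((p:ℝ) ^ (-σ)) ^ e := by
  have := fe_le hval σ (p ^ e)
  calc fe a0 σ (p ^ e) ≤ ((p ^ e : ℕ):ℝ) ^ (-σ) := this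
    _ = ((p:ℝ) ^ (-σ)) ^ e := by
        rw [Nat.cast_pow]
        exact pow_rpow_aux (Nat.cast_nonneg p) e (-σ)

include hval in
lemma fe_pow_summable {p : ℕ} (hp : p.Prime) {σ : ℝ} (hσ : 1 ≤ σ) :
    Summable (fun e : ℕ => fe a0 σ (p ^ e)) := by
  refine Summable.of_nonneg_of_le (fun e => fe_nonneg hval σ _) (fun e => fe_pow_le hval hp σ e) ?_
  apply summable_geometric_of_lt_one (le_of_lt (r_pos hp σ))
  linarith [r_le_half hp hσ]

include hval hone in
lemma FF_structure {p : ℕ} (hp : p.Prime) {σ : ℝ} (hσ : 1 ≤ σ) :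
    ∃ T : ℝ, FF a0 σ p = 1 + (a0 p * (p:ℝ) ^ (-σ) + T) ∧ 0 ≤ T ∧ T ≤ 2 * ((p:ℝ) ^ (-σ))^2 := by
  set r := (p:ℝ) ^ (-σ) with hr
  have hr0 : 0 < r := r_pos hp σ
  have hrh : r ≤ 1/2 := r_le_half hp hσ
  have hsum0 := fe_pow_summable hval hp hσ (p := p) (σ := σ)
  have hsum1 : Summable (fun e : ℕ => fe a0 σ (p ^ (e+1))) := by
    exact_mod_cast (summable_nat_add_iff 1).2 hsum0
  have hsum2 : Summable (fun e : ℕ => fe a0 σ (p ^ (e+2))) := by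
    exact_mod_cast (summable_nat_add_iff 2).2 hsum0
  refine ⟨∑' e : ℕ, fe a0 σ (p ^ (e+2)), ?_, ?_, ?_⟩
  · rw [FF, Summable.tsum_eq_zero_add hsum0, Summable.tsum_eq_zero_add hsum1]
    rw [pow_zero, fe_one hone, pow_one]
    have hfp : fe a0 σ p = a0 p * r := by
      unfold fe
      rw [if_neg hp.pos.ne']
    rw [hfp]
  · exact tsum_nonneg (fun e => fe_nonneg hval σ _)
  · have hb : ∀ e : ℕ, fe a0 σ (p ^ (e+2)) ≤ r^2 * r^e := by
      intro e
      calc fe a0 σ (p ^ (e+2)) ≤ r ^ (e+2) := fe_pow_le hval hp σ (e+2)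
        _ = r^2 * r^e := by ring
    have hgeom : Summable (fun e : ℕ => r^2 * r^e) :=
      (summable_geometric_of_lt_one hr0.le (by linarith)).mul_left _
    calc (∑' e : ℕ, fe a0 σ (p ^ (e+2))) ≤ ∑' e : ℕ, r^2 * r^e :=
          Summable.tsum_le_tsum hb hsum2 hgeom
      _ = r^2 * (1 - r)⁻¹ := by
          rw [tsum_mul_left, tsum_geometric_of_lt_one hr0.le (by linarith)]
      _ ≤ 2 * r^2 := by
          have h1 : (1 - r)⁻¹ ≤ 2 := by
            rw [inv_le_comm₀ (by linarith) two_pos]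
            linarith
          nlinarith
include hval hone in
lemma FF_ge_one {p : ℕ} (hp : p.Prime) {σ : ℝ} (hσ : 1 ≤ σ) : 1 ≤ FF a0 σ p := by
  obtain ⟨T, hT, hT0, _⟩ := FF_structure hval hone hp hσ
  have ha : 0 ≤ a0 p := by
    rcases hval p hp.one_lt.le with h | h <;> simp [h]
  nlinarith [r_pos hp σ, hT]

include hval hone in
lemma log_FF_bound {p : ℕ} (hp : p.Prime) {σ : ℝ} (hσ : 1 ≤ σ) :
    |Real.log (FF a0 σ p) - cc a0 p * (p:ℝ) ^ (-σ)| ≤ 6 * (p:ℝ) ^ (-(2:ℝ)) := by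
  set r := (p:ℝ) ^ (-σ) with hr
  have hr0 : 0 < r := r_pos hp σ
  have hrh : r ≤ 1/2 := r_le_half hp hσ
  obtain ⟨T, hT, hT0, hT2⟩ := FF_structure hval hone hp hσ
  have ha01 : a0 p = 0 ∨ a0 p = 1 := hval p hp.one_lt.le
  have hcc : cc a0 p * r = a0 p * r := by
    unfold cc
    rcases ha01 with h | h
    · rw [if_neg (fun hand => by rw [h] at hand; exact one_ne_zero hand.2.symm), h]
    · rw [if_pos ⟨hp, h⟩, h]
  set x := a0 p * r + T with hx
  have ha0 : 0 ≤ a0 p := by rcases ha01 with h | h <;> simp [h]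
  have ha1 : a0 p ≤ 1 := by rcases ha01 with h | h <;> simp [h]
  have hx0 : 0 ≤ x := by nlinarith
  have hx2 : x ≤ 2 * r := by nlinarith
  obtain ⟨hlow, hhigh⟩ := log_one_add_bounds hx0
  have hr2 : r^2 = (p:ℝ) ^ (-(2:ℝ) * σ) := by
    rw [hr, ← Real.rpow_natCast ((p:ℝ) ^ (-σ)) 2, ← Real.rpow_mul (Nat.cast_nonneg p)]
    norm_num
    ring_nf
  have hr2le : r^2 ≤ (p:ℝ) ^ (-(2:ℝ)) := by
    rw [hr2]
    apply Real.rpow_le_rpow_of_exponent_le (by exact_mod_cast hp.one_lt.le)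
    nlinarith
  rw [hT, hcc, abs_le]
  constructor
  · have : Real.log (1 + x) ≥ x - x^2 := hlow
    nlinarith
  · nlinarith

include hval hone hmul in
lemma hasSum_log_FF {σ : ℝ} (hσ : 1 < σ) :
    HasSum (fun p : Nat.Primes => Real.log (FF a0 σ p)) (Real.log (∑' n, fe a0 σ n)) := by
  have hprod := euler_hasProd hval hone hmul hσ
  have hφ : 1 ≤ ∑' n, fe a0 σ n := by
    have := Summable.le_tsum (f := fe a0 σ) ((fe_norm_summable hval hσ).of_norm) 1
      (fun i _ => fe_nonneg hval σ i)
    rwa [fe_one hone σ] at this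
  unfold HasProd at hprod
  unfold HasSum
  have hcont : ContinuousAt Real.log (∑' n, fe a0 σ n) :=
    Real.continuousAt_log (by linarith)
  have := hcont.tendsto.comp hprod
  refine this.congr (fun S => ?_)
  simp only [Function.comp_apply]
  rw [Real.log_prod]
  intro p hpS
  have := FF_ge_one hval hone p.prop (le_of_lt hσ)
  linarith


noncomputable def rr (a0 : ℕ → ℝ) (σ : ℝ) (p : ℕ) : ℝ :=
  Real.log (FF a0 σ p) - cc a0 p * (p:ℝ) ^ (-σ)

lemma cont_rpow_neg {x : ℝ} (hx : 0 < x) : Continuous (fun σ : ℝ => x ^ (-σ)) := by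
  have h : (fun σ : ℝ => x ^ (-σ)) = fun σ => Real.exp (Real.log x * (-σ)) :=
    funext fun σ => Real.rpow_def_of_pos hx (-σ)
  rw [h]
  continuity

include hval in
lemma FF_tendsto {p : ℕ} (hp : p.Prime) :
    Tendsto (fun σ => FF a0 σ p) (nhdsWithin 1 (Ioi 1)) (nhds (FF a0 1 p)) := by
  have hp1 : (1:ℝ) < (p:ℝ) := by exact_mod_cast hp.one_lt
  apply tendsto_tsum_of_dominated_convergence (bound := fun e : ℕ => ((p:ℝ)⁻¹) ^ e)
  · apply summable_geometric_of_lt_one (by positivity)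
    rw [inv_lt_one_iff₀]
    right; exact hp1
  · intro e
    have hx : (0:ℝ) < ((p ^ e : ℕ):ℝ) := by
      have := pow_pos hp.pos e
      exact_mod_cast this
    have hcont := (cont_rpow_neg hx).tendsto (1:ℝ)
    have := hcont.const_mul (if (p^e : ℕ) = 0 then (0:ℝ) else a0 (p^e))
    exact (this.mono_left nhdsWithin_le_nhds).congr (fun σ => rfl)
  · apply Filter.eventually_of_mem self_mem_nhdsWithin
    intro σ hσ e
    have hσ1 : (1:ℝ) ≤ σ := le_of_lt hσ
    rw [Real.norm_eq_abs, abs_of_nonneg (fe_nonneg hval σ _)]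
    calc fe a0 σ (p ^ e) ≤ ((p:ℝ) ^ (-σ)) ^ e := fe_pow_le hval hp σ e
      _ ≤ ((p:ℝ)⁻¹) ^ e := by
          apply pow_le_pow_left₀ (le_of_lt (r_pos hp σ))
          rw [← Real.rpow_neg_one (p:ℝ)]
          exact Real.rpow_le_rpow_of_exponent_le (by linarith) (by linarith)

include hval hone in
lemma rr_tendsto {p : ℕ} (hp : p.Prime) :
    Tendsto (fun σ => rr a0 σ p) (nhdsWithin 1 (Ioi 1)) (nhds (rr a0 1 p)) := by
  unfold rr
  apply Tendsto.sub
  · have h1 : ContinuousAt Real.log (FF a0 1 p) :=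
      Real.continuousAt_log (by linarith [FF_ge_one hval hone hp (le_refl (1:ℝ))])
    exact h1.tendsto.comp (FF_tendsto hval hp)
  · have hx : (0:ℝ) < (p:ℝ) := by exact_mod_cast hp.pos
    exact ((cont_rpow_neg hx).tendsto (1:ℝ)).const_mul _ |>.mono_left nhdsWithin_le_nhds

lemma summable_bound_primes :
    Summable (fun p : Nat.Primes => 6 * ((p:ℕ):ℝ) ^ (-(2:ℝ))) := by
  have h1 : Summable (fun n : ℕ => (n:ℝ) ^ (-(2:ℝ))) :=
    Real.summable_nat_rpow.2 (by norm_num)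
  exact ((h1.comp_injective (fun a b => Subtype.ext)).mul_left 6)

include hval hone in
lemma R_tendsto :
    Tendsto (fun σ => ∑' p : Nat.Primes, rr a0 σ (p:ℕ)) (nhdsWithin 1 (Ioi 1))
      (nhds (∑' p : Nat.Primes, rr a0 1 (p:ℕ))) := by
  apply tendsto_tsum_of_dominated_convergence (bound := fun p : Nat.Primes => 6 * ((p:ℕ):ℝ) ^ (-(2:ℝ)))
    summable_bound_primes
  · intro p
    exact rr_tendsto hval hone p.prop
  · apply Filter.eventually_of_mem self_mem_nhdsWithin
    intro σ hσ p
    rw [Real.norm_eq_abs]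
    exact log_FF_bound hval hone p.prop (le_of_lt hσ)

include hval hone hmul in
lemma logphi_eq {σ : ℝ} (hσ : 1 < σ)
    (hccsum : Summable (fun n : ℕ => cc a0 n * (n:ℝ) ^ (-σ))) :
    Real.log (∑' n, fe a0 σ n)
      = (∑' n : ℕ, cc a0 n * (n:ℝ) ^ (-σ)) + ∑' p : Nat.Primes, rr a0 σ (p:ℕ) := by
  have hsupp : Function.support (fun n : ℕ => cc a0 n * (n:ℝ) ^ (-σ)) ⊆ {n | n.Prime} := by
    intro n hn
    simp only [Function.mem_support] at hn
    by_contra hnp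
    apply hn
    unfold cc
    rw [if_neg (fun hand => hnp hand.1)]
    ring
  have hcc : HasSum (fun p : Nat.Primes => cc a0 (p:ℕ) * ((p:ℕ):ℝ) ^ (-σ))
      (∑' n : ℕ, cc a0 n * (n:ℝ) ^ (-σ)) :=
    (hasSum_subtype_iff_of_support_subset hsupp).2 hccsum.hasSum
  have hlog := hasSum_log_FF hval hone hmul hσ
  have hdiff := hlog.sub hcc
  have : (fun p : Nat.Primes => Real.log (FF a0 σ (p:ℕ)) - cc a0 (p:ℕ) * ((p:ℕ):ℝ) ^ (-σ))
      = fun p : Nat.Primes => rr a0 σ (p:ℕ) := rfl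
  rw [this] at hdiff
  have := hdiff.tsum_eq
  linarith [this]

end Euler


lemma contOn_rpow (c : ℝ) : ContinuousOn (fun t : ℝ => t ^ c) (Ioi (2:ℝ)) := by
  intro t ht
  have ht0 : t ≠ 0 := by have := Set.mem_Ioi.1 ht; positivity
  exact (continuousAt_id.rpow_const (Or.inl ht0)).continuousWithinAt

lemma contOn_main {σ : ℝ} : ContinuousOn (fun t : ℝ => t ^ (-σ) / Real.log t) (Ioi (2:ℝ)) := by
  apply ContinuousOn.div (contOn_rpow (-σ))
  · intro t ht
    have ht2 := Set.mem_Ioi.1 ht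
    exact (Real.continuousAt_log (by linarith)).continuousWithinAt
  · intro t ht
    have ht2 := Set.mem_Ioi.1 ht
    exact (Real.log_pos (by linarith)).ne'

section Main
variable {c : ℕ → ℝ} {lam δ K : ℝ}
  (hc0 : ∀ n, 0 ≤ c n) (hc1 : ∀ n, c n ≤ 1) (hcsmall : ∀ n < 2, c n = 0)
  (hlam1 : lam < 1) (hδ : 0 < δ) (hK : 0 < K)
  (hbound : ∀ t : ℝ, 2 ≤ t → |piA c t - (1 - lam) * t / Real.log t| ≤
      K * t / Real.log t ^ (1 + δ))

-- integrand measurability and integrability facts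
include hc0 hc1 hcsmall in
lemma piA_meas : Measurable (piA c) := (piA_monotone hc0 hc1 hcsmall).measurable

lemma main_integrand_integrable {σ : ℝ} (hσ : 1 < σ) :
    IntegrableOn (fun t : ℝ => t ^ (-σ) / Real.log t) (Ioi 2) := by
  refine Integrable.mono' (g := fun t => (Real.log 2)⁻¹ * t ^ (-σ))
    ((integrableOn_Ioi_rpow_of_lt (by linarith) two_pos).const_mul _)
    ((contOn_main (σ := σ)).aestronglyMeasurable measurableSet_Ioi) ?_
  filter_upwards [ae_restrict_mem measurableSet_Ioi] with t ht
  have ht2 : (2:ℝ) < t := ht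
  have hlogt : Real.log 2 ≤ Real.log t := Real.log_le_log two_pos ht2.le
  have hlog2 : 0 < Real.log 2 := Real.log_pos one_lt_two
  have ht0 : (0:ℝ) < t := by linarith
  have hlogt0 : 0 < Real.log t := lt_of_lt_of_le hlog2 hlogt
  rw [Real.norm_eq_abs, abs_of_nonneg (by positivity)]
  rw [div_le_iff₀ hlogt0, mul_comm ((Real.log 2)⁻¹) _, mul_assoc]
  have h1 : (1:ℝ) ≤ (Real.log 2)⁻¹ * Real.log t := by
    rw [← inv_mul_cancel₀ hlog2.ne']
    apply mul_le_mul_of_nonneg_left hlogt (by positivity)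
  nlinarith [Real.rpow_nonneg ht0.le (-σ)]

include hc0 hc1 hcsmall hδ hK hbound in
lemma EE_integrable {σ : ℝ} (hσ : 1 < σ) :
    IntegrableOn (fun t : ℝ => (piA c t - (1 - lam) * t / Real.log t) * (σ * t ^ (-σ - 1)))
      (Ioi 2) := by
  have hmeas : AEStronglyMeasurable
      (fun t : ℝ => (piA c t - (1 - lam) * t / Real.log t) * (σ * t ^ (-σ - 1)))
      (volume.restrict (Ioi 2)) := by
    apply AEStronglyMeasurable.mul
    · refine AEStronglyMeasurable.sub ((piA_meas hc0 hc1 hcsmall).aestronglyMeasurable) ?_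
      refine ContinuousOn.aestronglyMeasurable ?_ measurableSet_Ioi
      apply ContinuousOn.div (continuousOn_const.mul continuousOn_id)
      · intro t ht
        have ht2 := Set.mem_Ioi.1 ht
        exact (Real.continuousAt_log (by linarith)).continuousWithinAt
      · intro t ht
        have ht2 := Set.mem_Ioi.1 ht
        exact (Real.log_pos (by linarith)).ne'
    · exact (continuousOn_const.mul (contOn_rpow _)).aestronglyMeasurable measurableSet_Ioi
  refine Integrable.mono' (g := fun t => (K * σ / Real.log 2 ^ (1+δ)) * t ^ (-σ))
    ((integrableOn_Ioi_rpow_of_lt (by linarith) two_pos).const_mul _)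
    hmeas ?_
  filter_upwards [ae_restrict_mem measurableSet_Ioi] with t ht
  have ht2 : (2:ℝ) < t := ht
  have ht0 : (0:ℝ) < t := by linarith
  have hσ0 : (0:ℝ) < σ := by linarith
  have hlog2 : 0 < Real.log 2 := Real.log_pos one_lt_two
  have hlogt : 0 < Real.log t := lt_of_lt_of_le hlog2 (Real.log_le_log two_pos ht2.le)
  have hlogpow : Real.log 2 ^ (1+δ) ≤ Real.log t ^ (1+δ) :=
    Real.rpow_le_rpow hlog2.le (Real.log_le_log two_pos ht2.le) (by linarith)
  have hlogpow0 : 0 < Real.log 2 ^ (1+δ) := Real.rpow_pos_of_pos hlog2 _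
  have hEE := hbound t ht2.le
  rw [Real.norm_eq_abs, abs_mul]
  have h2 : |σ * t ^ (-σ - 1)| = σ * t ^ (-σ - 1) := abs_of_nonneg (by positivity)
  rw [h2]
  have hstep : |piA c t - (1 - lam) * t / Real.log t| ≤ K * t / Real.log 2 ^ (1+δ) := by
    refine hEE.trans ?_
    apply div_le_div_of_nonneg_left (by positivity) hlogpow0 hlogpow
  calc |piA c t - (1 - lam) * t / Real.log t| * (σ * t ^ (-σ - 1))
      ≤ (K * t / Real.log 2 ^ (1+δ)) * (σ * t ^ (-σ - 1)) := by
        apply mul_le_mul_of_nonneg_right hstep (by positivity)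
    _ = (K * σ / Real.log 2 ^ (1+δ)) * (t * t ^ (-σ - 1)) := by ring
    _ = (K * σ / Real.log 2 ^ (1+δ)) * t ^ (-σ) := by
        congr 1
        rw [show (-σ : ℝ) = (-σ-1)+1 by ring, Real.rpow_add_one ht0.ne']
        ring

include hc0 hc1 hcsmall hδ hK hbound hlam1 in
lemma P_split {σ : ℝ} (hσ : 1 < σ) :
    ∑' n : ℕ, c n * (n:ℝ) ^ (-σ)
      = (1 - lam) * σ * (∫ t in Ioi (2:ℝ), t ^ (-σ) / Real.log t)
        + ∫ t in Ioi (2:ℝ), (piA c t - (1 - lam) * t / Real.log t) * (σ * t ^ (-σ - 1)) := by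
  rw [tonelli hc0 hc1 hcsmall hσ]
  have hcongr : ∀ t ∈ Ioi (2:ℝ), piA c t * (σ * t ^ (-σ - 1))
      = (1 - lam) * σ * (t ^ (-σ) / Real.log t)
        + (piA c t - (1 - lam) * t / Real.log t) * (σ * t ^ (-σ - 1)) := by
    intro t ht
    have ht2 := Set.mem_Ioi.1 ht
    have ht0 : (0:ℝ) < t := by linarith
    have key : t ^ (-σ) = t * t ^ (-σ - 1) := by
      rw [show (-σ : ℝ) = (-σ-1)+1 by ring, Real.rpow_add_one ht0.ne']
      ring
    rw [key]
    ring
  rw [setIntegral_congr_fun measurableSet_Ioi hcongr]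
  rw [integral_add]
  · congr 1
    exact integral_const_mul _ _
  · exact ((main_integrand_integrable hσ).const_mul _)
  · exact EE_integrable hc0 hc1 hcsmall hδ hK hbound hσ

lemma cont_sigma_rpow {x : ℝ} (hx : 0 < x) : Continuous (fun σ : ℝ => x ^ (-σ - 1)) := by
  have h : (fun σ : ℝ => x ^ (-σ - 1)) = (fun y : ℝ => x ^ (-y)) ∘ (fun σ : ℝ => σ + 1) := by
    funext σ
    simp only [Function.comp_apply]
    ring_nf
  rw [h]
  exact (cont_rpow_neg hx).comp (continuous_id.add continuous_const)

include hc0 hc1 hcsmall hδ hK hbound hlam1 in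
lemma J_tendsto : Tendsto
    (fun σ => ∫ t in Ioi (2:ℝ), (piA c t - (1 - lam) * t / Real.log t) * (σ * t ^ (-σ - 1)))
    (nhdsWithin 1 (Ioi 1))
    (nhds (∫ t in Ioi (2:ℝ), (piA c t - (1 - lam) * t / Real.log t) * (1 * t ^ (-(1:ℝ) - 1)))) := by
  apply MeasureTheory.tendsto_integral_filter_of_dominated_convergence
    (bound := fun t => 2 * K * (1 / (t * Real.log t ^ (1+δ))))
  · apply Filter.eventually_of_mem self_mem_nhdsWithin
    intro σ hσ
    exact (EE_integrable hc0 hc1 hcsmall hδ hK hbound hσ).1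
  · apply Filter.eventually_of_mem (Ioo_mem_nhdsGT_of_mem (Set.left_mem_Ico.2 one_lt_two))
    intro σ hσ
    filter_upwards [ae_restrict_mem measurableSet_Ioi] with t ht
    have ht2 := Set.mem_Ioi.1 ht
    have ht0 : (0:ℝ) < t := by linarith
    have ht1 : (1:ℝ) ≤ t := by linarith
    have hσ1 : (1:ℝ) < σ := hσ.1
    have hσ2 : σ ≤ 2 := hσ.2.le
    have hlog2 : 0 < Real.log 2 := Real.log_pos one_lt_two
    have hlogt : 0 < Real.log t := lt_of_lt_of_le hlog2 (Real.log_le_log two_pos ht2.le)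
    have hlogpow : 0 < Real.log t ^ (1+δ) := Real.rpow_pos_of_pos hlogt _
    have hEE := hbound t ht2.le
    rw [Real.norm_eq_abs, abs_mul, abs_of_nonneg (by positivity : (0:ℝ) ≤ σ * t ^ (-σ - 1))]
    have hpow : t ^ (-σ - 1) ≤ t ^ (-(2:ℝ)) := by
      apply Real.rpow_le_rpow_of_exponent_le ht1
      linarith
    have hpow2 : t ^ (-(2:ℝ)) = 1 / t ^ (2:ℕ) := by
      rw [Real.rpow_neg ht0.le, Real.rpow_two]
      norm_num
    calc |piA c t - (1 - lam) * t / Real.log t| * (σ * t ^ (-σ - 1))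
        ≤ (K * t / Real.log t ^ (1+δ)) * (σ * t ^ (-σ - 1)) :=
          mul_le_mul_of_nonneg_right hEE (by positivity)
      _ ≤ (K * t / Real.log t ^ (1+δ)) * (2 * t ^ (-(2:ℝ))) := by
          apply mul_le_mul_of_nonneg_left ?_ (by positivity)
          have := mul_le_mul hσ2 hpow (by positivity) (by norm_num : (0:ℝ) ≤ 2)
          exact this
      _ = 2 * K * (1 / (t * Real.log t ^ (1+δ))) := by
          rw [hpow2]
          field_simp
  · exact (log_pow_integrable hδ).const_mul _
  · filter_upwards [ae_restrict_mem measurableSet_Ioi] with t ht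
    have ht2 := Set.mem_Ioi.1 ht
    have ht0 : (0:ℝ) < t := by linarith
    have hc : Continuous (fun σ : ℝ => (piA c t - (1 - lam) * t / Real.log t) * (σ * t ^ (-σ - 1))) :=
      continuous_const.mul (continuous_id.mul (cont_sigma_rpow ht0))
    exact (hc.tendsto 1).mono_left nhdsWithin_le_nhds

lemma I_tendsto : ∃ CI, Tendsto
    (fun σ => (∫ t in Ioi (2:ℝ), t ^ (-σ) / Real.log t) + Real.log (σ - 1))
    (nhdsWithin 1 (Ioi 1)) (nhds CI) := by
  obtain ⟨C, hC⟩ := E1_tendsto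
  have hlog2 : 0 < Real.log 2 := Real.log_pos one_lt_two
  have hmap : Tendsto (fun σ : ℝ => (σ - 1) * Real.log 2) (nhdsWithin 1 (Ioi 1))
      (nhdsWithin 0 (Ioi 0)) := by
    rw [tendsto_nhdsWithin_iff]
    constructor
    · have hcont : Continuous (fun σ : ℝ => (σ - 1) * Real.log 2) :=
        (continuous_id.sub continuous_const).mul continuous_const
      have := (hcont.tendsto 1).mono_left (nhdsWithin_le_nhds (s := Ioi 1))
      simpa using this
    · apply Filter.eventually_of_mem self_mem_nhdsWithin
      intro σ hσ
      have : (0:ℝ) < σ - 1 := by simpa using hσ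
      exact Set.mem_Ioi.2 (by positivity)
  have hcomp := hC.comp hmap
  refine ⟨C - Real.log (Real.log 2), ?_⟩
  have heq : ∀ᶠ σ in nhdsWithin (1:ℝ) (Ioi 1),
      (E1 ((σ - 1) * Real.log 2) + Real.log ((σ - 1) * Real.log 2)) - Real.log (Real.log 2)
        = (∫ t in Ioi (2:ℝ), t ^ (-σ) / Real.log t) + Real.log (σ - 1) := by
    apply Filter.eventually_of_mem self_mem_nhdsWithin
    intro σ hσ
    have hσ1 : (1:ℝ) < σ := hσ
    rw [← I_eq_E1 hσ1, Real.log_mul (by linarith) hlog2.ne']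
    ring
  exact Tendsto.congr' heq (hcomp.sub_const (Real.log (Real.log 2)))

include hc0 hc1 hcsmall hδ hK hbound hlam1 in
lemma P_lim : ∃ CP, Tendsto
    (fun σ => (∑' n : ℕ, c n * (n:ℝ) ^ (-σ)) + (1 - lam) * Real.log (σ - 1))
    (nhdsWithin 1 (Ioi 1)) (nhds CP) := by
  obtain ⟨CI, hCI⟩ := I_tendsto
  set J1 := ∫ t in Ioi (2:ℝ), (piA c t - (1 - lam) * t / Real.log t) * (1 * t ^ (-(1:ℝ) - 1))
  refine ⟨(1 - lam) * CI + J1, ?_⟩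
  have hB : Tendsto (fun σ : ℝ => (σ - 1) * Real.log (σ - 1)) (nhdsWithin 1 (Ioi 1)) (nhds 0) := by
    have h1 : Tendsto (fun σ : ℝ => σ - 1) (nhdsWithin 1 (Ioi 1)) (nhds 0) := by
      have hcont : Continuous (fun σ : ℝ => σ - 1) := continuous_id.sub continuous_const
      have := (hcont.tendsto (1:ℝ)).mono_left (nhdsWithin_le_nhds (s := Ioi 1))
      simpa using this
    have h2 := (Real.continuous_mul_log.tendsto 0).comp h1
    simpa [Function.comp_def] using h2
  have hσid : Tendsto (fun σ : ℝ => σ) (nhdsWithin 1 (Ioi 1)) (nhds 1) :=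
    tendsto_id.mono_left nhdsWithin_le_nhds
  have hmain : Tendsto
      (fun σ => (1 - lam) * (σ * ((∫ t in Ioi (2:ℝ), t ^ (-σ) / Real.log t) + Real.log (σ - 1))
        - (σ - 1) * Real.log (σ - 1))
        + ∫ t in Ioi (2:ℝ), (piA c t - (1 - lam) * t / Real.log t) * (σ * t ^ (-σ - 1)))
      (nhdsWithin 1 (Ioi 1)) (nhds ((1 - lam) * (1 * CI - 0) + J1)) := by
    exact (((hσid.mul hCI).sub hB).const_mul _).add (J_tendsto hc0 hc1 hcsmall hlam1 hδ hK hbound)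
  have hlim : ((1 - lam) * (1 * CI - 0) + J1) = (1 - lam) * CI + J1 := by ring
  rw [hlim] at hmain
  refine Tendsto.congr' ?_ hmain
  apply Filter.eventually_of_mem self_mem_nhdsWithin
  intro σ hσ
  have hσ1 : (1:ℝ) < σ := hσ
  dsimp only
  rw [P_split hc0 hc1 hcsmall hlam1 hδ hK hbound hσ1]
  ring

end Main

section Final

lemma piA_eq_ncard (a0 : ℕ → ℝ) {t : ℝ} (ht : 0 ≤ t) :
    piA (cc a0) t = (Set.ncard {p : ℕ | p.Prime ∧ a0 p = 1 ∧ (p:ℝ) ≤ t} : ℝ) := by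
  classical
  set F := (Finset.range (⌊t⌋₊ + 1)).filter (fun n => n.Prime ∧ a0 n = 1) with hF
  have hset : {p : ℕ | p.Prime ∧ a0 p = 1 ∧ (p:ℝ) ≤ t} = (F : Set ℕ) := by
    ext n
    simp only [Set.mem_setOf_eq, hF, Finset.coe_filter, Finset.mem_range, Nat.lt_succ_iff,
      Set.mem_setOf_eq]
    constructor
    · rintro ⟨h1, h2, h3⟩
      exact ⟨Nat.le_floor h3, h1, h2⟩
    · rintro ⟨h1, h2, h3⟩
      exact ⟨h2, h3, (Nat.le_floor_iff ht).1 h1⟩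
  rw [hset, Set.ncard_coe_finset]
  rw [piA_eq_sum (c := cc a0)]
  have hstep : ∀ n ∈ Finset.range (⌊t⌋₊ + 1),
      (if (n:ℝ) ≤ t then cc a0 n else 0) = (if n.Prime ∧ a0 n = 1 then (1:ℝ) else 0) := by
    intro n hn
    rw [Finset.mem_range, Nat.lt_succ_iff] at hn
    rw [if_pos ((Nat.le_floor_iff ht).1 hn)]
    rfl
  rw [Finset.sum_congr rfl hstep, Finset.sum_boole, hF]
  · intro n hn
    unfold cc
    rw [if_neg]
    rintro ⟨hp, -⟩
    exact absurd hp.two_le (by omega)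

theorem stmt_13 (lam δ K : ℝ) (hlam0 : 0 ≤ lam) (hlam1 : lam < 1)
    (hδ : 0 < δ) (hK : 0 < K)
    (a0 : ℕ → ℝ)
    (hval : ∀ n : ℕ, 1 ≤ n → a0 n = 0 ∨ a0 n = 1)
    (hone : a0 1 = 1)
    (hmul : ∀ m n : ℕ, 1 ≤ m → 1 ≤ n → Nat.Coprime m n → a0 (m * n) = a0 m * a0 n)
    (hcount : ∀ t : ℝ, 2 ≤ t →
      |(Set.ncard {p : ℕ | p.Prime ∧ a0 p = 1 ∧ (p : ℝ) ≤ t} : ℝ) -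
          (1 - lam) * t / Real.log t| ≤ K * t / Real.log t ^ (1 + δ)) :
    (∀ s : ℝ, 1 < s → Summable (fun n : ℕ => a0 (n + 1) / ((n : ℝ) + 1) ^ s)) ∧
    ∃ L : ℝ, 0 < L ∧ Filter.Tendsto
      (fun s : ℝ => (s - 1) ^ (1 - lam) * ∑' n : ℕ, a0 (n + 1) / ((n : ℝ) + 1) ^ s)
      (nhdsWithin 1 (Set.Ioi 1)) (nhds L) := by
  classical
  have hfe_shift : ∀ s : ℝ, ∀ n : ℕ, fe a0 s (n + 1) = a0 (n + 1) / ((n : ℝ) + 1) ^ s := by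
    intro s n
    unfold fe
    rw [if_neg (Nat.succ_ne_zero n)]
    have hcast : ((n + 1 : ℕ) : ℝ) = (n:ℝ) + 1 := by push_cast; ring
    rw [hcast, Real.rpow_neg (by positivity), div_eq_mul_inv]
  have hsummable : ∀ s : ℝ, 1 < s → Summable (fun n : ℕ => a0 (n + 1) / ((n : ℝ) + 1) ^ s) := by
    intro s hs
    have h1 : Summable (fun n : ℕ => fe a0 s (n + 1)) :=
      ((fe_norm_summable hval hs).of_norm).comp_injective (add_left_injective 1)
    exact h1.congr (fun n => hfe_shift s n)
  refine ⟨hsummable, ?_⟩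
  have hφeq : ∀ s : ℝ, 1 < s →
      (∑' n : ℕ, a0 (n + 1) / ((n : ℝ) + 1) ^ s) = ∑' n, fe a0 s n := by
    intro s hs
    rw [Summable.tsum_eq_zero_add ((fe_norm_summable hval hs).of_norm)]
    have hfe0 : fe a0 s 0 = 0 := by unfold fe; simp
    rw [hfe0, zero_add]
    exact tsum_congr (fun n => (hfe_shift s n).symm)
  -- counting function hypotheses
  have hc0 : ∀ n, 0 ≤ cc a0 n := by
    intro n; unfold cc; split <;> norm_num
  have hc1 : ∀ n, cc a0 n ≤ 1 := by
    intro n; unfold cc; split <;> norm_num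
  have hcsmall : ∀ n < 2, cc a0 n = 0 := by
    intro n hn
    unfold cc
    rw [if_neg]
    rintro ⟨hp, -⟩
    exact absurd hp.two_le (by omega)
  have hbound : ∀ t : ℝ, 2 ≤ t → |piA (cc a0) t - (1 - lam) * t / Real.log t| ≤
      K * t / Real.log t ^ (1 + δ) := by
    intro t ht
    rw [piA_eq_ncard a0 (by linarith : (0:ℝ) ≤ t)]
    exact hcount t ht
  obtain ⟨CP, hCP⟩ := P_lim hc0 hc1 hcsmall hlam1 hδ hK hbound
  have hR := R_tendsto hval hone
  set RL := ∑' p : Nat.Primes, rr a0 1 (p:ℕ) with hRL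
  refine ⟨Real.exp (CP + RL), Real.exp_pos _, ?_⟩
  have hgg : Tendsto
      (fun s => (1 - lam) * Real.log (s - 1) + Real.log (∑' n, fe a0 s n))
      (nhdsWithin 1 (Ioi 1)) (nhds (CP + RL)) := by
    refine Tendsto.congr' ?_ (hCP.add hR)
    apply Filter.eventually_of_mem self_mem_nhdsWithin
    intro s hs
    have hs1 : (1:ℝ) < s := hs
    dsimp only
    rw [logphi_eq hval hone hmul hs1 (summable_c_rpow hc0 hc1 hs1)]
    ring
  have hexp := (Real.continuous_exp.tendsto (CP + RL)).comp hgg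
  refine Tendsto.congr' ?_ hexp
  apply Filter.eventually_of_mem self_mem_nhdsWithin
  intro s hs
  have hs1 : (1:ℝ) < s := hs
  have hφ1 : (1:ℝ) ≤ ∑' n, fe a0 s n := by
    have := Summable.le_tsum (f := fe a0 s) ((fe_norm_summable hval hs1).of_norm) 1
      (fun i _ => fe_nonneg hval s i)
    rwa [fe_one hone s] at this
  simp only [Function.comp_apply]
  rw [Real.exp_add, Real.exp_log (by linarith : (0:ℝ) < ∑' n, fe a0 s n)]
  rw [show (1 - lam) * Real.log (s - 1) = Real.log (s - 1) * (1 - lam) by ring]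
  rw [← Real.rpow_def_of_pos (by linarith : (0:ℝ) < s - 1)]
  rw [hφeq s hs1]

end Final
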